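/- Let T be a p-string ending with a unique smallest end-marker $. Define L_T[i] = fce(T[R⁻¹(i)−1..]) (with T[0..] := $) where R⁻¹(i) is the start position of the lexicographically i-th p-encoded suffix, and define LF(i) = R(R⁻¹(i)−1) if R⁻¹(i) > 1, else LF(i) = R(|T|). Then for any 1 ≤ i < j ≤ |T| with L_T[i] = L_T[j], it holds that LF(i) < LF(j). -/

import Mathlib

/-- Symbols of a parameterized string: static symbols `s a` (from Σs) and
parameter symbols `p a` (from Σp). -/
inductive PSym where
  | s : ℕ → PSym
  | p : ℕ → PSym
deriving DecidableEq

/-- Symbols of a p-encoded string: static symbols, finite distances, and ∞. -/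
inductive Enc where
  | s : ℕ → Enc
  | fin : ℕ → Enc
  | inf : Enc
deriving DecidableEq

/-- Order embedding: static symbols < natural numbers < ∞. -/
def Enc.toPair : Enc → ℕ ×ₗ ℕ
  | .s a => toLex (0, a)
  | .fin d => toLex (1, d)
  | .inf => toLex (2, 0)

instance : LinearOrder Enc :=
  LinearOrder.lift' Enc.toPair (by
    rintro (a | a | _) (b | b | _) h <;>
      simp_all [Enc.toPair, toLex_inj, Prod.ext_iff])

/-- Largest position `j < i` (0-based) carrying the same symbol as position `i`. -/
def prevOcc (w : List PSym) (i : ℕ) : Option ℕ :=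
  ((List.range i).filter (fun j => w[j]? = w[i]?)).max?

/-- The p-encoding of position `i` (0-based) of `w`. -/
def pencSym (w : List PSym) (i : ℕ) : Enc :=
  match w[i]? with
  | some (PSym.s a) => Enc.s a
  | some (PSym.p _) =>
    match prevOcc w i with
    | some j => Enc.fin (i - j)
    | none => Enc.inf
  | none => Enc.inf

/-- The p-encoding ⟨w⟩ of a p-string `w`. -/
def penc (w : List PSym) : List Enc :=
  (List.range w.length).map (pencSym w)

/-- Lexicographic (strict) order on p-encoded strings. -/
def lexLt (x y : List Enc) : Prop := List.Lex (· < ·) x y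

def lexLe (x y : List Enc) : Prop := lexLt x y ∨ x = y

/-- Length of the longest common prefix. -/
def lcp {α : Type*} [DecidableEq α] : List α → List α → ℕ
  | a :: x, b :: y => if a = b then lcp x y + 1 else 0
  | _, _ => 0

/-- Number of ∞'s in the longest common prefix of two p-encoded strings. -/
def lcpInf (x y : List Enc) : ℕ := (x.take (lcp x y)).count Enc.inf

/-- Number of distinct p-symbols occurring in `w` (denoted |w|_p). -/
def distinctP (w : List PSym) : ℕ :=
  (w.filterMap (fun s => match s with | PSym.p a => some a | PSym.s _ => none)).dedup.length

/-- For `w` starting with a p-symbol: the rank of `w[1]` among the distinct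
p-symbols of `w[1..h+1]`, where `h+1 = min{|w|, second occurrence of w[1] in w}`. -/
def fceRank (w : List PSym) : ℕ :=
  match w with
  | [] => 0
  | c :: rest => distinctP ((c :: rest).take (min (c :: rest).length (2 + rest.idxOf c)))

/-- The function fce from the paper; `fce ε = $` is modelled as `Enc.s 0`. -/
def fce (w : List PSym) : Enc :=
  match w with
  | [] => Enc.s 0
  | PSym.s a :: _ => Enc.s a
  | w => Enc.fin (fceRank w)



/-! ### Auxiliary lemmas -/

section Aux

lemma enc_lt_iff (x y : Enc) : x < y ↔ x.toPair < y.toPair := Iff.rfl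

lemma not_inf_lt (e : Enc) : ¬ (Enc.inf < e) := by
  rw [enc_lt_iff]
  cases e <;> simp [Enc.toPair, Prod.Lex.lt_iff]

lemma s_lt_fin (a d : ℕ) : Enc.s a < Enc.fin d := by
  rw [enc_lt_iff]; simp [Enc.toPair, Prod.Lex.lt_iff]

lemma fin_lt_fin {d e : ℕ} (h : d < e) : Enc.fin d < Enc.fin e := by
  rw [enc_lt_iff]; simp [Enc.toPair, Prod.Lex.lt_iff, h]

lemma lex_asymm : ∀ {x y : List Enc},
    List.Lex (· < ·) x y → List.Lex (· < ·) y x → False := by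
  intro x y h1
  induction h1 with
  | nil => intro h2; cases h2
  | @rel a l₁ b l₂ hab =>
      intro h2
      cases h2 with
      | rel hba => exact absurd hba (lt_asymm hab)
      | cons _ => exact lt_irrefl _ hab
  | @cons a l₁ l₂ _ ih =>
      intro h2
      cases h2 with
      | rel hba => exact lt_irrefl _ hba
      | cons h => exact ih h

lemma nat_max?_eq_some_iff {l : List ℕ} {a : ℕ} :
    l.max? = some a ↔ a ∈ l ∧ ∀ b ∈ l, b ≤ a :=
  List.max?_eq_some_iff

lemma prevOcc_none_iff {u : List PSym} {i : ℕ} :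
    prevOcc u i = none ↔ ∀ j < i, u[j]? ≠ u[i]? := by
  simp [prevOcc, List.max?_eq_none_iff, List.filter_eq_nil_iff, List.mem_range]

lemma prevOcc_mem {u : List PSym} {i j : ℕ} (h : prevOcc u i = some j) :
    j < i ∧ u[j]? = u[i]? := by
  unfold prevOcc at h
  rw [nat_max?_eq_some_iff] at h
  have := h.1
  simp only [List.mem_filter, List.mem_range, decide_eq_true_eq] at this
  exact this

lemma prevOcc_cons_some {c : PSym} {u : List PSym} {i j : ℕ}
    (h : prevOcc u i = some j) :
    prevOcc (c :: u) (i + 1) = some (j + 1) := by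
  have hj := prevOcc_mem h
  unfold prevOcc
  rw [nat_max?_eq_some_iff]
  constructor
  · simp only [List.mem_filter, List.mem_range, decide_eq_true_eq]
    refine ⟨by omega, ?_⟩
    simpa using hj.2
  · intro b hb
    simp only [List.mem_filter, List.mem_range, decide_eq_true_eq] at hb
    rcases b with _ | k
    · omega
    · have hk : k < i := by omega
      have hkk : u[k]? = u[i]? := by simpa using hb.2
      have : k ≤ j := by
        unfold prevOcc at h
        rw [nat_max?_eq_some_iff] at h
        exact h.2 k (by
          simp only [List.mem_filter, List.mem_range, decide_eq_true_eq]
          exact ⟨hk, hkk⟩)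
      omega

lemma prevOcc_cons_none_pos {c : PSym} {u : List PSym} {i : ℕ}
    (h : prevOcc u i = none) (hc : u[i]? = some c) :
    prevOcc (c :: u) (i + 1) = some 0 := by
  have hno : ∀ j < i, u[j]? ≠ u[i]? := prevOcc_none_iff.mp h
  unfold prevOcc
  rw [nat_max?_eq_some_iff]
  constructor
  · simp only [List.mem_filter, List.mem_range, decide_eq_true_eq]
    refine ⟨by omega, ?_⟩
    simp [hc]
  · intro b hb
    simp only [List.mem_filter, List.mem_range, decide_eq_true_eq] at hb
    rcases b with _ | k
    · rfl
    · exfalso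
      have hk : k < i := by omega
      have : u[k]? = u[i]? := by simpa using hb.2
      exact hno k hk this

lemma prevOcc_cons_none_neg {c : PSym} {u : List PSym} {i : ℕ}
    (h : prevOcc u i = none) (hc : u[i]? ≠ some c) :
    prevOcc (c :: u) (i + 1) = none := by
  have hno : ∀ j < i, u[j]? ≠ u[i]? := prevOcc_none_iff.mp h
  rw [prevOcc_none_iff]
  intro j hj
  rcases j with _ | k
  · simp only [List.getElem?_cons_zero, List.getElem?_cons_succ]
    intro hh; exact hc hh.symm
  · simp only [List.getElem?_cons_succ]
    exact hno k (by omega)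

lemma indexOf_lt {u : List PSym} {c : PSym} {j : ℕ} (h : j < u.idxOf c) :
    u[j]? ≠ some c := by
  induction u generalizing j with
  | nil => simp
  | cons a u ih =>
      rw [List.idxOf_cons] at h
      by_cases hac : a = c
      · subst hac; simp at h
      · rw [beq_eq_false_iff_ne.mpr hac] at h
        simp only [cond_false] at h
        rcases j with _ | j
        · simpa using hac
        · simpa using ih (by omega)

lemma getElem?_indexOf {u : List PSym} {c : PSym} (h : u.idxOf c < u.length) :
    u[u.idxOf c]? = some c := by
  rw [List.getElem?_eq_getElem h, List.getElem_idxOf h]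

lemma indexOf_eq_of {u : List PSym} {c : PSym} {i : ℕ}
    (h1 : u[i]? = some c) (h2 : ∀ j < i, u[j]? ≠ some c) : u.idxOf c = i := by
  have hi : i < u.length := by
    by_contra hcon
    rw [List.getElem?_eq_none (by omega)] at h1
    simp at h1
  rcases lt_trichotomy (u.idxOf c) i with h | h | h
  · exact absurd (getElem?_indexOf (h.trans hi)) (h2 _ h)
  · exact h
  · exact absurd h1 (indexOf_lt h)

lemma penc_length (w : List PSym) : (penc w).length = w.length := by simp [penc]

lemma penc_getElem? (w : List PSym) (k : ℕ) (h : k < w.length) :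
    (penc w)[k]? = some (pencSym w k) := by
  simp [penc, h]

end Aux

section Penc

lemma pencSym_zero_s (a : ℕ) (u : List PSym) :
    pencSym (PSym.s a :: u) 0 = Enc.s a := by
  simp [pencSym]

lemma pencSym_zero_p (a : ℕ) (u : List PSym) :
    pencSym (PSym.p a :: u) 0 = Enc.inf := by
  have h0 : prevOcc (PSym.p a :: u) 0 = none := by
    rw [prevOcc_none_iff]; omega
  simp [pencSym, h0]

lemma pencSym_cons_s (a : ℕ) (u : List PSym) (i : ℕ) :
    pencSym (PSym.s a :: u) (i + 1) = pencSym u i := by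
  unfold pencSym
  rw [List.getElem?_cons_succ]
  cases hu : u[i]? with
  | none => rfl
  | some s =>
      cases s with
      | s b => rfl
      | p b =>
          cases hp : prevOcc u i with
          | some j =>
              rw [prevOcc_cons_some hp]
              simp [Nat.succ_sub_succ]
          | none =>
              rw [prevOcc_cons_none_neg hp (by simp [hu])]

lemma pencSym_cons_p (a : ℕ) (u : List PSym) (i : ℕ) (hi : i < u.length) :
    pencSym (PSym.p a :: u) (i + 1) =
      if u.idxOf (PSym.p a) = i then Enc.fin (i + 1) else pencSym u i := by
  have hu : u[i]? = some u[i] := List.getElem?_eq_getElem hi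
  cases hc : u[i] with
  | s b =>
      rw [hc] at hu
      have hne : u.idxOf (PSym.p a) ≠ i := by
        intro he
        have := getElem?_indexOf (c := PSym.p a) (u := u) (by rw [he]; exact hi)
        rw [he, hu] at this
        simp at this
      rw [if_neg hne]
      unfold pencSym
      rw [List.getElem?_cons_succ, hu]
  | p b =>
      rw [hc] at hu
      cases hp : prevOcc u i with
      | some j =>
          have hj := prevOcc_mem hp
          have hne : u.idxOf (PSym.p a) ≠ i := by
            intro he
            have hia := getElem?_indexOf (c := PSym.p a) (u := u) (by rw [he]; exact hi)
            rw [he, hu] at hia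
            have hba : b = a := by simpa using hia
            subst hba
            exact indexOf_lt (by rw [he]; exact hj.1) (hj.2.trans hu)
          rw [if_neg hne]
          unfold pencSym
          rw [List.getElem?_cons_succ, hu, prevOcc_cons_some hp, hp]
          simp [Nat.succ_sub_succ]
      | none =>
          by_cases hba : b = a
          · subst hba
            have heq : u.idxOf (PSym.p b) = i :=
              indexOf_eq_of hu (fun j hj hjc => (prevOcc_none_iff.mp hp) j hj (hjc.trans hu.symm))
            rw [if_pos heq]
            unfold pencSym
            rw [List.getElem?_cons_succ, hu, prevOcc_cons_none_pos hp hu]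
            simp
          · have hne : u.idxOf (PSym.p a) ≠ i := by
              intro he
              have hia := getElem?_indexOf (c := PSym.p a) (u := u) (by rw [he]; exact hi)
              rw [he, hu] at hia
              exact hba (by simpa using hia)
            rw [if_neg hne]
            unfold pencSym
            rw [List.getElem?_cons_succ, hu,
              prevOcc_cons_none_neg hp (by simp [hu, hba]), hp]

lemma penc_cons_s (a : ℕ) (u : List PSym) :
    penc (PSym.s a :: u) = Enc.s a :: penc u := by
  unfold penc
  rw [List.length_cons, List.range_succ_eq_map, List.map_cons, List.map_map]
  rw [pencSym_zero_s]
  congr 1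
  apply List.map_congr_left
  intro i _
  exact pencSym_cons_s a u i

lemma penc_cons_p (a : ℕ) (u : List PSym) :
    penc (PSym.p a :: u) =
      Enc.inf :: (penc u).set (u.idxOf (PSym.p a))
        (Enc.fin (u.idxOf (PSym.p a) + 1)) := by
  apply List.ext_getElem
  · simp [penc]
  intro k h1 h2
  rcases k with _ | k
  · have : (penc (PSym.p a :: u))[0]? = some (pencSym (PSym.p a :: u) 0) :=
      penc_getElem? _ 0 (by simp)
    rw [List.getElem?_eq_getElem h1] at this
    rw [Option.some_inj.mp this, pencSym_zero_p]
    simp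
  · have hk : k < u.length := by
      simpa [penc] using h1
    have hl : (penc (PSym.p a :: u))[k+1]? = some (pencSym (PSym.p a :: u) (k+1)) :=
      penc_getElem? _ (k+1) (by simpa using hk)
    rw [List.getElem?_eq_getElem h1] at hl
    rw [Option.some_inj.mp hl, pencSym_cons_p a u k hk]
    rw [List.getElem_cons_succ, List.getElem_set]
    have hpk : (penc u)[k]'(by simpa [penc_length] using hk) = pencSym u k := by
      simp [penc]
    by_cases hm : u.idxOf (PSym.p a) = k <;> simp [hm, hpk]

lemma penc_fin_le {u : List PSym} {k d : ℕ}
    (h : (penc u)[k]? = some (Enc.fin d)) : d ≤ k := by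
  by_cases hk : k < u.length
  · rw [penc_getElem? u k hk] at h
    have h' : pencSym u k = Enc.fin d := Option.some_inj.mp h
    unfold pencSym at h'
    cases hu : u[k]? with
    | none => rw [hu] at h'; simp at h'
    | some s =>
        cases s with
        | s b => rw [hu] at h'; simp at h'
        | p b =>
            rw [hu] at h'
            cases hp : prevOcc u k with
            | none => rw [hp] at h'; simp at h'
            | some j =>
                rw [hp] at h'
                have : k - j = d := by simpa using h'
                omega
  · rw [List.getElem?_eq_none (by rw [penc_length]; omega)] at h
    simp at h

end Penc

section Count

def pval : PSym → Option ℕ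
  | PSym.p a => some a
  | PSym.s _ => none

lemma distinctP_eq (w : List PSym) :
    distinctP w = (w.filterMap pval).toFinset.card := by
  rw [List.card_toFinset]
  rfl

lemma mem_filterMap_pval {b : ℕ} {l : List PSym} :
    b ∈ l.filterMap pval ↔ PSym.p b ∈ l := by
  rw [List.mem_filterMap]
  constructor
  · rintro ⟨s, hs, hv⟩
    cases s with
    | s c => simp [pval] at hv
    | p c => simp [pval] at hv; subst hv; exact hs
  · intro h; exact ⟨PSym.p b, h, rfl⟩

lemma distinctP_append_p (l : List PSym) (b : ℕ) :
    distinctP (l ++ [PSym.p b]) =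
      distinctP l + (if PSym.p b ∈ l then 0 else 1) := by
  rw [distinctP_eq, distinctP_eq, List.filterMap_append]
  have h1 : List.filterMap pval [PSym.p b] = [b] := by simp [pval]
  rw [h1, List.toFinset_append]
  have h2 : ([b] : List ℕ).toFinset = {b} := by simp
  rw [h2]
  have h3 : (l.filterMap pval).toFinset ∪ {b} = insert b (l.filterMap pval).toFinset := by
    rw [Finset.union_comm, ← Finset.insert_eq]
  rw [h3]
  by_cases hb : PSym.p b ∈ l
  · rw [if_pos hb, Finset.card_insert_of_mem (by rw [List.mem_toFinset]; exact mem_filterMap_pval.mpr hb)]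
    omega
  · rw [if_neg hb, Finset.card_insert_of_notMem (by rw [List.mem_toFinset]; exact fun hc => hb (mem_filterMap_pval.mp hc))]

lemma distinctP_append_s (l : List PSym) (b : ℕ) :
    distinctP (l ++ [PSym.s b]) = distinctP l := by
  rw [distinctP_eq, distinctP_eq, List.filterMap_append]
  have h1 : List.filterMap pval [PSym.s b] = [] := by simp [pval]
  rw [h1, List.append_nil]

lemma distinctP_cons_p (a : ℕ) (l : List PSym) :
    distinctP (PSym.p a :: l) = (if PSym.p a ∈ l then 0 else 1) + distinctP l := by
  rw [distinctP_eq, distinctP_eq]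
  have h1 : List.filterMap pval (PSym.p a :: l) = a :: l.filterMap pval := by
    simp [pval]
  rw [h1, List.toFinset_cons]
  by_cases hb : PSym.p a ∈ l
  · rw [if_pos hb, Finset.card_insert_of_mem (by rw [List.mem_toFinset]; exact mem_filterMap_pval.mpr hb)]
    omega
  · rw [if_neg hb, Finset.card_insert_of_notMem (by rw [List.mem_toFinset]; exact fun hc => hb (mem_filterMap_pval.mp hc))]
    omega

lemma mem_take_iff {x : PSym} {u : List PSym} {k : ℕ} :
    x ∈ u.take k ↔ ∃ j, j < k ∧ u[j]? = some x := by
  rw [List.mem_iff_getElem?]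
  constructor
  · rintro ⟨j, hj⟩
    rw [List.getElem?_take] at hj
    by_cases hjk : j < k
    · rw [if_pos hjk] at hj; exact ⟨j, hjk, hj⟩
    · rw [if_neg hjk] at hj; simp at hj
  · rintro ⟨j, hjk, hj⟩
    exact ⟨j, by rw [List.getElem?_take, if_pos hjk]; exact hj⟩

lemma count_inf_take (u : List PSym) : ∀ k, k ≤ u.length →
    ((penc u).take k).count Enc.inf = distinctP (u.take k) := by
  intro k
  induction k with
  | zero => simp [distinctP]
  | succ k ih =>
      intro hk
      have hk' : k < u.length := hk
      have hu : u[k]? = some u[k] := List.getElem?_eq_getElem hk'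
      rw [List.take_succ, List.take_succ, penc_getElem? u k hk', hu]
      simp only [Option.toList_some]
      rw [List.count_append]
      cases hc : u[k] with
      | s b =>
          rw [hc] at hu
          have hps : pencSym u k = Enc.s b := by unfold pencSym; rw [hu]
          rw [hps]
          have : distinctP (u.take k ++ [PSym.s b]) = distinctP (u.take k) :=
            distinctP_append_s _ b
          rw [this, ih (by omega)]
          simp
      | p b =>
          rw [hc] at hu
          rw [distinctP_append_p]
          by_cases hmem : PSym.p b ∈ u.take k
          · obtain ⟨j, hjk, hj⟩ := mem_take_iff.mp hmem
            have hpo : prevOcc u k ≠ none := by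
              intro hnone
              exact (prevOcc_none_iff.mp hnone) j hjk (by rw [hj, hu])
            cases hp : prevOcc u k with
            | none => exact absurd hp hpo
            | some m =>
                have hps : pencSym u k = Enc.fin (k - m) := by
                  unfold pencSym; rw [hu, hp]
                rw [hps, if_pos hmem, ih (by omega)]
                simp
          · have hp : prevOcc u k = none := by
              cases hp : prevOcc u k with
              | none => rfl
              | some m =>
                  obtain ⟨hm1, hm2⟩ := prevOcc_mem hp
                  rw [hu] at hm2
                  exact absurd (mem_take_iff.mpr ⟨m, hm1, hm2⟩) hmem
            have hps : pencSym u k = Enc.inf := by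
              unfold pencSym; rw [hu, hp]
            rw [hps, if_neg hmem, ih (by omega)]
            simp
            try omega

lemma fceRank_p (a : ℕ) (u : List PSym) :
    fceRank (PSym.p a :: u) =
      1 + ((penc u).take (u.idxOf (PSym.p a))).count Enc.inf := by
  have hrank : fceRank (PSym.p a :: u) =
      distinctP ((PSym.p a :: u).take
        (min (PSym.p a :: u).length (2 + u.idxOf (PSym.p a)))) := rfl
  rw [hrank]
  have hle := List.idxOf_le_length (a := PSym.p a) (l := u)
  by_cases hm : u.idxOf (PSym.p a) < u.length
  · have hmin : min (PSym.p a :: u).length (2 + u.idxOf (PSym.p a)) =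
        (u.idxOf (PSym.p a) + 1) + 1 := by
      simp only [List.length_cons]; omega
    rw [hmin, List.take_succ_cons, List.take_succ, getElem?_indexOf hm]
    have hnm : PSym.p a ∉ u.take (u.idxOf (PSym.p a)) := by
      intro hmem
      obtain ⟨j, hj1, hj2⟩ := mem_take_iff.mp hmem
      exact indexOf_lt hj1 hj2
    have h1 : distinctP (PSym.p a :: (u.take (u.idxOf (PSym.p a)) ++ [PSym.p a])) =
        0 + distinctP (u.take (u.idxOf (PSym.p a)) ++ [PSym.p a]) := by
      rw [distinctP_cons_p, if_pos (by simp)]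
    rw [Option.toList_some, h1, distinctP_append_p, if_neg hnm,
      count_inf_take u _ (le_of_lt hm)]
    omega
  · have hml : u.idxOf (PSym.p a) = u.length := by omega
    have hmin : min (PSym.p a :: u).length (2 + u.idxOf (PSym.p a)) =
        (PSym.p a :: u).length := by
      simp only [List.length_cons]; omega
    rw [hmin, List.take_length]
    have hnm : PSym.p a ∉ u := by
      intro hmem
      exact hm (List.idxOf_lt_length_iff.mpr hmem)
    have htl : (penc u).take u.length = penc u := by
      rw [← penc_length u]; exact List.take_length
    have h2 := count_inf_take u u.length (le_refl _)
    rw [htl, List.take_length] at h2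
    rw [distinctP_cons_p, if_neg hnm, hml, htl, h2]

end Count

section Core

lemma core : ∀ {α β : List Enc}, List.Lex (· < ·) α β →
    ∀ (g mα mβ : ℕ) (vα vβ : Enc),
    (mα < α.length → α[mα]? = some Enc.inf) →
    (α.take mα).count Enc.inf = g →
    (β.take mβ).count Enc.inf = g →
    (mα = mβ → vα = vβ) →
    (∀ e, α[mβ]? = some e → e ≠ Enc.inf → e < vβ) →
    List.Lex (· < ·) (α.set mα vα) (β.set mβ vβ) := by
  intro α β hlex
  induction hlex with
  | @nil b l₂ =>
      intro g mα mβ vα vβ h2 h3 h4 hv hcrux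
      rw [List.set_nil]
      cases hB : (b :: l₂).set mβ vβ with
      | nil =>
          exfalso
          have := congrArg List.length hB
          simp at this
      | cons x xs => exact List.Lex.nil
  | @rel a l₁ b l₂ hab =>
      intro g mα mβ vα vβ h2 h3 h4 hv hcrux
      have hai : a ≠ Enc.inf := by
        intro h; rw [h] at hab; exact not_inf_lt b hab
      have hmα : mα ≠ 0 := by
        intro h
        have := h2 (by simp [h])
        rw [h] at this
        simp at this
        exact hai this
      obtain ⟨mα', rfl⟩ : ∃ m, mα = m + 1 := ⟨mα - 1, by omega⟩
      rw [List.set_cons_succ]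
      rcases mβ with _ | mβ'
      · rw [List.set_cons_zero]
        exact List.Lex.rel (hcrux a (by simp) hai)
      · rw [List.set_cons_succ]
        exact List.Lex.rel hab
  | @cons a l₁ l₂ h' ih =>
      intro g mα mβ vα vβ h2 h3 h4 hv hcrux
      rcases mα with _ | mα'
      · -- mα = 0 : head is inf, g = 0
        have ha : a = Enc.inf := by
          have := h2 (by simp)
          simpa using this
        have hg : g = 0 := by simpa using h3.symm
        rcases mβ with _ | mβ'
        · rw [List.set_cons_zero, List.set_cons_zero, hv rfl]
          exact List.Lex.cons h'
        · exfalso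
          rw [List.take_succ_cons, List.count_cons] at h4
          rw [ha] at h4
          simp [hg] at h4
      · rcases mβ with _ | mβ'
        · -- mβ = 0, mα ≥ 1
          have hg : g = 0 := by simpa using h4.symm
          have hai : a ≠ Enc.inf := by
            intro h
            rw [List.take_succ_cons, List.count_cons, h] at h3
            simp [hg] at h3
          rw [List.set_cons_succ, List.set_cons_zero]
          exact List.Lex.rel (hcrux a (by simp) hai)
        · rw [List.set_cons_succ, List.set_cons_succ]
          refine List.Lex.cons ?_
          rw [List.take_succ_cons, List.count_cons] at h3 h4
          by_cases ha : a = Enc.inf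
          · have hga : (l₁.take mα').count Enc.inf + 1 = g := by
              rw [ha] at h3; simpa using h3
            have hgb : (l₂.take mβ').count Enc.inf + 1 = g := by
              rw [ha] at h4; simpa using h4
            exact ih ((l₁.take mα').count Enc.inf) mα' mβ' vα vβ
              (fun h => by simpa using h2 (by simpa using h))
              rfl (by omega)
              (fun h => hv (by omega))
              (fun e he => hcrux e (by simpa using he))
          · have hbeq : (a == Enc.inf) = false := beq_eq_false_iff_ne.mpr ha
            rw [hbeq] at h3 h4
            simp at h3 h4
            exact ih g mα' mβ' vα vβ
              (fun h => by simpa using h2 (by simpa using h))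
              h3 h4
              (fun h => hv (by omega))
              (fun e he => hcrux e (by simpa using he))

lemma fce_lex (c d : PSym) (u v : List PSym)
    (hfce : fce (c :: u) = fce (d :: v))
    (hlt : List.Lex (· < ·) (penc u) (penc v)) :
    List.Lex (· < ·) (penc (c :: u)) (penc (d :: v)) := by
  cases c with
  | s a =>
      cases d with
      | s b =>
          have hab : a = b := by simpa [fce] using hfce
          subst hab
          rw [penc_cons_s, penc_cons_s]
          exact List.Lex.cons hlt
      | p b => simp [fce] at hfce
  | p a =>
      cases d with
      | s b => simp [fce] at hfce
      | p b =>
          have hrank : fceRank (PSym.p a :: u) = fceRank (PSym.p b :: v) := by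
            simpa [fce] using hfce
          rw [fceRank_p, fceRank_p] at hrank
          set mα := u.idxOf (PSym.p a) with hmα
          set mβ := v.idxOf (PSym.p b) with hmβ
          have hg : ((penc u).take mα).count Enc.inf
              = ((penc v).take mβ).count Enc.inf := by omega
          rw [penc_cons_p, penc_cons_p]
          refine List.Lex.cons ?_
          refine core hlt (((penc u).take mα).count Enc.inf) mα mβ _ _ ?_ rfl hg.symm
            (fun h => congrArg (fun t => Enc.fin (t + 1)) h) ?_
          · intro hlen
            have hlen' : mα < u.length := by rwa [penc_length] at hlen
            rw [penc_getElem? u mα hlen']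
            have hum : u[mα]? = some (PSym.p a) := getElem?_indexOf hlen'
            have hpo : prevOcc u mα = none := by
              rw [prevOcc_none_iff]
              intro j hj
              rw [hum]
              exact indexOf_lt hj
            unfold pencSym
            rw [hum, hpo]
          · intro e he hne
            cases e with
            | s x => exact s_lt_fin x (mβ + 1)
            | fin d => exact fin_lt_fin (by have := penc_fin_le he; omega)
            | inf => exact absurd rfl hne

end Core
theorem stmt13 (T : List PSym) (n : ℕ) (hn : n = T.length)
    -- `$` (modelled as `PSym.s 0`, the smallest symbol) is the end-marker of `T`
    (hend : T.getLast? = some (PSym.s 0))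
    (huniq : ∀ i, i + 1 < n → T[i]? ≠ some (PSym.s 0))
    -- `Rinv i` is the (0-based) starting position of the lexicographically
    -- (i+1)-st p-encoded suffix of `T`
    (Rinv : ℕ → ℕ) (hdom : ∀ i < n, Rinv i < n)
    (hsorted : ∀ i j, i < j → j < n →
      lexLt (penc (T.drop (Rinv i))) (penc (T.drop (Rinv j))))
    -- `R` is the rank function, the inverse of `Rinv`
    (R : ℕ → ℕ) (hRdom : ∀ p < n, R p < n)
    (hRinv : ∀ i < n, R (Rinv i) = i) (hR : ∀ p < n, Rinv (R p) = p)
    -- the pBWT array `L`:  L i = fce (T[R⁻¹(i)−1..])  (with T[0..] := $)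
    (L : ℕ → Enc)
    (hL : ∀ i < n, L i = fce (if Rinv i = 0 then [PSym.s 0] else T.drop (Rinv i - 1)))
    -- the LF-mapping
    (LF : ℕ → ℕ)
    (hLF : ∀ i < n, LF i = if Rinv i = 0 then R (n - 1) else R (Rinv i - 1))
    (i j : ℕ) (hij : i < j) (hjn : j < n) (heq : L i = L j) :
    LF i < LF j := by
  subst hn
  have hin : i < T.length := lt_trans hij hjn
  have hRi := hdom i hin
  have hRj := hdom j hjn
  have hne : Rinv i ≠ Rinv j := by
    intro h
    have : i = j := by rw [← hRinv i hin, h, hRinv j hjn]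
    omega
  rw [hL i hin, hL j hjn] at heq
  have hhead : ∀ k, k < T.length → fce (T.drop k) = Enc.s 0 →
      T[k]? = some (PSym.s 0) := by
    intro k hk hf
    rw [List.drop_eq_getElem_cons hk] at hf
    cases hc : T[k] with
    | s a =>
        rw [hc] at hf
        have : a = 0 := by simpa [fce] using hf
        rw [List.getElem?_eq_getElem hk, hc, this]
    | p a =>
        rw [hc] at hf
        simp [fce] at hf
  by_cases h0i : Rinv i = 0 <;> by_cases h0j : Rinv j = 0
  · exact absurd (h0i.trans h0j.symm) hne
  · exfalso
    rw [if_pos h0i, if_neg h0j] at heq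
    have hfj : fce (T.drop (Rinv j - 1)) = Enc.s 0 := by
      rw [← heq]; simp [fce]
    have hk : Rinv j - 1 < T.length := by omega
    have := hhead _ hk hfj
    exact huniq (Rinv j - 1) (by omega) this
  · exfalso
    rw [if_neg h0i, if_pos h0j] at heq
    have hfi : fce (T.drop (Rinv i - 1)) = Enc.s 0 := by
      rw [heq]; simp [fce]
    have hk : Rinv i - 1 < T.length := by omega
    have := hhead _ hk hfi
    exact huniq (Rinv i - 1) (by omega) this
  · rw [if_neg h0i, if_neg h0j] at heq
    have hpi : Rinv i - 1 < T.length := by omega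
    have hpj : Rinv j - 1 < T.length := by omega
    have h1i : Rinv i - 1 + 1 = Rinv i := by omega
    have h1j : Rinv j - 1 + 1 = Rinv j := by omega
    have hdi : T.drop (Rinv i - 1) = T[Rinv i - 1] :: T.drop (Rinv i) := by
      rw [List.drop_eq_getElem_cons hpi, h1i]
    have hdj : T.drop (Rinv j - 1) = T[Rinv j - 1] :: T.drop (Rinv j) := by
      rw [List.drop_eq_getElem_cons hpj, h1j]
    have hlex0 : List.Lex (· < ·) (penc (T.drop (Rinv i))) (penc (T.drop (Rinv j))) :=
      hsorted i j hij hjn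
    have hfce : fce (T[Rinv i - 1] :: T.drop (Rinv i))
        = fce (T[Rinv j - 1] :: T.drop (Rinv j)) := by
      rw [← hdi, ← hdj]; exact heq
    have hlex : List.Lex (· < ·) (penc (T.drop (Rinv i - 1)))
        (penc (T.drop (Rinv j - 1))) := by
      rw [hdi, hdj]
      exact fce_lex _ _ _ _ hfce hlex0
    rw [hLF i hin, hLF j hjn, if_neg h0i, if_neg h0j]
    have hRp := hRdom _ hpi
    have hRq := hRdom _ hpj
    rcases lt_trichotomy (R (Rinv i - 1)) (R (Rinv j - 1)) with h | h | h
    · exact h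
    · exfalso
      have : Rinv i - 1 = Rinv j - 1 := by
        rw [← hR _ hpi, h, hR _ hpj]
      rw [this] at hlex
      exact lex_asymm hlex hlex
    · exfalso
      have h2 := hsorted _ _ h hRp
      rw [hR _ hpj, hR _ hpi] at h2
      exact lex_asymm hlex h2
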